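/- Let n, m ≥ 1 and let d_i > 0, a_{ij} ≥ 0 (j ≠ i, with a_{ii} := 0), β_{ik} ≥ 0 be real constants with β_i := Σ_{k=1}^{m} β_{ik} > 0 for each i. Let h_{ik} : [0, ∞) → [0, ∞) satisfy (H4*): h_{ik} is bounded, locally Lipschitz continuous on [0, ∞), continuously differentiable on a right neighborhood of 0, with h_{ik}(0) = 0, h_{ik}'(0) = 1, and h_{ik}(x) > 0 for x > 0, for all i, k. Assume: (i) there exists u ≫ 0 with d_i u_i > Σ_{j≠i} a_{ij} u_j for all i (i.e., D − A is a non-singular M-matrix, where D = diag(d_1, …, d_n) and A = [a_{ij}]); and (ii) there exists v ≫ 0 with (β_i − d_i)v_i + Σ_{j≠i} a_{ij} v_j > 0 for all i. Then there exists a point x* ∈ ℝⁿ with x*_i > 0 for all i such that −d_i x*_i + Σ_{j≠i} a_{ij} x*_j + Σ_{k=1}^{m} β_{ik} h_{ik}(x*_i) = 0 for every i = 1, …, n; that is, the autonomous delay system x_i'(t) = −d_i x_i(t) + Σ_{j≠i} a_{ij} x_j(t) + Σ_{k=1}^{m} β_{ik} h_{ik}(x_i(t − τ_{ik}(t))) has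 a positive equilibrium. -/

import Mathlib

open Real Set
section stmt8aux
open Topology Filter
/-- Minimal root of a continuous function crossing from positive to nonpositive. -/
lemma stmt8_minRoot (f : ℝ → ℝ) (a b : ℝ) (hab : a ≤ b)
    (hcont : ContinuousOn f (Set.Icc a b)) (ha : 0 < f a) (hb : f b ≤ 0) :
    sInf {y ∈ Set.Icc a b | f y ≤ 0} ∈ Set.Icc a b ∧
    f (sInf {y ∈ Set.Icc a b | f y ≤ 0}) = 0 ∧
    ∀ y ∈ Set.Icc a b, f y ≤ 0 → sInf {y ∈ Set.Icc a b | f y ≤ 0} ≤ y := by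
  have hZeq : {y ∈ Set.Icc a b | f y ≤ 0} = Set.Icc a b ∩ f ⁻¹' Set.Iic 0 := rfl
  have hZclosed : IsClosed {y ∈ Set.Icc a b | f y ≤ 0} := by
    rw [hZeq]
    exact hcont.preimage_isClosed_of_isClosed isClosed_Icc isClosed_Iic
  have hZne : {y ∈ Set.Icc a b | f y ≤ 0}.Nonempty := ⟨b, Set.right_mem_Icc.2 hab, hb⟩
  have hZbdd : BddBelow {y ∈ Set.Icc a b | f y ≤ 0} := ⟨a, fun y hy => hy.1.1⟩
  set r := sInf {y ∈ Set.Icc a b | f y ≤ 0} with hrdef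
  have hrZ : r ∈ {y ∈ Set.Icc a b | f y ≤ 0} := hZclosed.csInf_mem hZne hZbdd
  have hrmin : ∀ y ∈ Set.Icc a b, f y ≤ 0 → r ≤ y := fun y hy hfy => csInf_le hZbdd ⟨hy, hfy⟩
  refine ⟨hrZ.1, ?_, hrmin⟩
  rcases lt_or_eq_of_le hrZ.2 with hlt | heq
  · exfalso
    have har : a < r := by
      rcases eq_or_lt_of_le hrZ.1.1 with hh | hh
      · exact absurd (hh ▸ ha) (by linarith)
      · exact hh
    have hc : ContinuousWithinAt f (Set.Icc a b) r := hcont r hrZ.1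
    have hev : ∀ᶠ y in 𝓝[Set.Icc a b] r, f y < 0 := hc.eventually_lt_const hlt
    have hle : 𝓝[Set.Ico a r] r ≤ 𝓝[Set.Icc a b] r :=
      nhdsWithin_mono r (fun y hy => ⟨hy.1, hy.2.le.trans hrZ.1.2⟩)
    haveI := right_nhdsWithin_Ico_neBot har
    have hev2 : ∀ᶠ y in 𝓝[Set.Ico a r] r, f y < 0 := hev.filter_mono hle
    have hmemev : ∀ᶠ y in 𝓝[Set.Ico a r] r, y ∈ Set.Ico a r :=
      eventually_mem_nhdsWithin
    obtain ⟨y, hy, hfy⟩ := (hev2.and hmemev).exists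
    exact absurd (hrmin y ⟨hfy.1, hfy.2.le.trans hrZ.1.2⟩ hy.le) (not_le.2 hfy.2)
  · exact heq

/-- From C¹ with derivative 1 at 0: lower bound `h x ≥ (1-η) x` near 0. -/
lemma stmt8_lower (h : ℝ → ℝ) (η : ℝ) (hη : 0 < η)
    (hC1 : ∃ ε > (0 : ℝ), ∃ g : ℝ → ℝ, ContinuousOn g (Set.Icc 0 ε) ∧ g 0 = 1 ∧
        ∀ x ∈ Set.Icc 0 ε, HasDerivWithinAt h (g x) (Set.Icc 0 ε) x)
    (h0 : h 0 = 0) :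
    ∃ δ > (0 : ℝ), ∀ x ∈ Set.Icc 0 δ, (1 - η) * x ≤ h x := by
  obtain ⟨ε, hε, g, hgc, hg0, hderiv⟩ := hC1
  have h0mem : (0 : ℝ) ∈ Set.Icc 0 ε := ⟨le_refl _, hε.le⟩
  have hev : ∀ᶠ y in 𝓝[Set.Icc 0 ε] (0 : ℝ), 1 - η < g y :=
    (hgc 0 h0mem).eventually_const_lt (by rw [hg0]; linarith)
  rw [eventually_nhdsWithin_iff] at hev
  rw [Metric.eventually_nhds_iff] at hev
  obtain ⟨δ', hδ', hball⟩ := hev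
  set δ := min (δ' / 2) ε with hδdef
  have hδpos : 0 < δ := lt_min (by linarith) hε
  have hδε : δ ≤ ε := min_le_right _ _
  have hglb : ∀ y ∈ Set.Icc (0 : ℝ) δ, 1 - η ≤ g y := by
    intro y hy
    have h1 : dist y 0 < δ' := by
      rw [Real.dist_eq, sub_zero, abs_of_nonneg hy.1]
      have := hy.2
      have : y ≤ δ' / 2 := le_trans this (min_le_left _ _)
      linarith
    exact (hball h1 ⟨hy.1, hy.2.trans hδε⟩).le
  have hsub : Set.Icc (0 : ℝ) δ ⊆ Set.Icc 0 ε := Set.Icc_subset_Icc le_rfl hδε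
  have hmono : MonotoneOn (fun x => h x - (1 - η) * x) (Set.Icc 0 δ) := by
    apply monotoneOn_of_hasDerivWithinAt_nonneg (convex_Icc 0 δ)
        (f' := fun x => g x - (1 - η))
    · intro x hx
      exact (((hderiv x (hsub hx)).continuousWithinAt.mono hsub).sub
        ((continuous_const.mul continuous_id).continuousWithinAt))
    · intro x hx
      have hxI : x ∈ Set.Icc 0 δ := interior_subset hx
      have hint : interior (Set.Icc (0:ℝ) δ) ⊆ Set.Icc 0 ε := fun y hy => hsub (interior_subset hy)
      have hd : HasDerivWithinAt h (g x) (interior (Set.Icc (0:ℝ) δ)) x :=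
        (hderiv x (hsub hxI)).mono hint
      have := hd.sub (((hasDerivWithinAt_id x _).const_mul (1 - η)))
      simp only [mul_one] at this
      exact this
    · intro x hx
      have hxI : x ∈ Set.Icc 0 δ := interior_subset hx
      have := hglb x hxI
      linarith
  refine ⟨δ, hδpos, fun x hx => ?_⟩
  have := hmono (Set.left_mem_Icc.2 hδpos.le) hx hx.1
  simp only [h0, mul_zero, sub_zero] at this
  linarith

/-- Continuity at positive points from the local Lipschitz hypothesis. -/
lemma stmt8_cont (h : ℝ → ℝ)
    (hlip : ∀ x, 0 ≤ x → ∃ ε > (0 : ℝ), ∃ L ≥ (0 : ℝ),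
        ∀ y ∈ Set.Icc (max 0 (x - ε)) (x + ε), ∀ z ∈ Set.Icc (max 0 (x - ε)) (x + ε),
          |h y - h z| ≤ L * |y - z|)
    (x : ℝ) (hx : 0 < x) : ContinuousAt h x := by
  obtain ⟨ε, hε, L, hL, hlip⟩ := hlip x hx.le
  have hmem : Set.Icc (max 0 (x - ε)) (x + ε) ∈ 𝓝 x :=
    Icc_mem_nhds (max_lt hx (by linarith)) (by linarith)
  have hlipon : LipschitzOnWith L.toNNReal h (Set.Icc (max 0 (x - ε)) (x + ε)) := by
    apply LipschitzOnWith.of_dist_le_mul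
    intro y hy z hz
    rw [Real.dist_eq, Real.dist_eq, Real.coe_toNNReal L hL]
    exact hlip y hy z hz
  exact hlipon.continuousOn.continuousAt hmem

end stmt8aux


/-- Existence of a positive equilibrium for the autonomous system
`x_i' = -d_i x_i + ∑_{j≠i} a_{ij} x_j + ∑_k β_{ik} h_{ik}(x_i(t - τ_{ik}(t)))`
under (H4*), (i) `D - A` a non-singular M-matrix, and (ii) `Mv ≫ 0`. -/
theorem stmt8
    (n m : ℕ) (hn : 1 ≤ n) (hm : 1 ≤ m)
    (d : Fin n → ℝ) (a : Fin n → Fin n → ℝ) (β : Fin n → Fin m → ℝ)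
    (h : Fin n → Fin m → ℝ → ℝ)
    (hdpos : ∀ i, 0 < d i)
    (hanneg : ∀ i j, j ≠ i → 0 ≤ a i j)
    (hadiag : ∀ i, a i i = 0)
    (hβnneg : ∀ i k, 0 ≤ β i k)
    (hβpos : ∀ i, 0 < ∑ k, β i k)
    -- (H4*)
    (hhbdd : ∀ i k, ∃ B, ∀ x, 0 ≤ x → h i k x ≤ B)
    (hhnneg : ∀ i k x, 0 ≤ x → 0 ≤ h i k x)
    (hhlip : ∀ i k x, 0 ≤ x → ∃ ε > (0 : ℝ), ∃ L ≥ (0 : ℝ),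
        ∀ y ∈ Set.Icc (max 0 (x - ε)) (x + ε), ∀ z ∈ Set.Icc (max 0 (x - ε)) (x + ε),
          |h i k y - h i k z| ≤ L * |y - z|)
    (hhC1 : ∀ i k, ∃ ε > (0 : ℝ), ∃ g : ℝ → ℝ, ContinuousOn g (Set.Icc 0 ε) ∧ g 0 = 1 ∧
        ∀ x ∈ Set.Icc 0 ε, HasDerivWithinAt (h i k) (g x) (Set.Icc 0 ε) x)
    (hh0 : ∀ i k, h i k 0 = 0)
    (hhpos : ∀ i k x, 0 < x → 0 < h i k x)
    -- (i): D - A is a non-singular M-matrix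
    (u : Fin n → ℝ) (hu : ∀ i, 0 < u i)
    (hM : ∀ i, ∑ j ∈ Finset.univ.erase i, a i j * u j < d i * u i)
    -- (ii)
    (v : Fin n → ℝ) (hv : ∀ i, 0 < v i)
    (hMv : ∀ i, 0 < ((∑ k, β i k) - d i) * v i + ∑ j ∈ Finset.univ.erase i, a i j * v j) :
    -- positive equilibrium
    ∃ xs : Fin n → ℝ, (∀ i, 0 < xs i) ∧
      ∀ i, -d i * xs i + (∑ j ∈ Finset.univ.erase i, a i j * xs j)
          + ∑ k, β i k * h i k (xs i) = 0 := by
  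
  classical
  haveI hne : Nonempty (Fin n) := ⟨⟨0, hn⟩⟩
  haveI hnem : Nonempty (Fin m) := ⟨⟨0, hm⟩⟩
  choose B hB using hhbdd
  set φ : Fin n → ℝ → ℝ := fun i y => ∑ k, β i k * h i k y with hφdef
  have hφle : ∀ i y, 0 ≤ y → φ i y ≤ ∑ k, β i k * B i k := fun i y hy =>
    Finset.sum_le_sum fun k _ => mul_le_mul_of_nonneg_left (hB i k y hy) (hβnneg i k)
  have hφcont : ∀ i y, 0 < y → ContinuousAt (φ i) y := by
    intro i y hy
    exact tendsto_finset_sum _ fun k _ =>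
      (continuousAt_const.mul (stmt8_cont (h i k) (fun x hx => hhlip i k x hx) y hy))
  -- choice of η
  set η : ℝ := (Finset.univ.inf' Finset.univ_nonempty fun i =>
      (((∑ k, β i k) - d i) * v i + ∑ j ∈ Finset.univ.erase i, a i j * v j)
        / ((∑ k, β i k) * v i)) / 2 with hηdef
  have hinfpos : 0 < Finset.univ.inf' Finset.univ_nonempty fun i =>
      (((∑ k, β i k) - d i) * v i + ∑ j ∈ Finset.univ.erase i, a i j * v j)
        / ((∑ k, β i k) * v i) :=
    (Finset.lt_inf'_iff _).2 fun i _ => div_pos (hMv i) (mul_pos (hβpos i) (hv i))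
  have hηpos : 0 < η := by rw [hηdef]; linarith
  have hηθ : ∀ i, η * ((∑ k, β i k) * v i) <
      ((∑ k, β i k) - d i) * v i + ∑ j ∈ Finset.univ.erase i, a i j * v j := by
    intro i
    have h2 := Finset.inf'_le (b := i)
      (fun i => (((∑ k, β i k) - d i) * v i + ∑ j ∈ Finset.univ.erase i, a i j * v j)
        / ((∑ k, β i k) * v i)) (Finset.mem_univ i)
    have h1 : η < (((∑ k, β i k) - d i) * v i + ∑ j ∈ Finset.univ.erase i, a i j * v j)
        / ((∑ k, β i k) * v i) := by rw [hηdef]; linarith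
    rw [lt_div_iff₀ (mul_pos (hβpos i) (hv i))] at h1
    linarith
  -- choice of δ0, s, ℓ
  choose δf hδf hlowf using fun i k => stmt8_lower (h i k) η hηpos (hhC1 i k) (hh0 i k)
  set δ0 : ℝ := Finset.univ.inf' Finset.univ_nonempty fun p : Fin n × Fin m => δf p.1 p.2
    with hδ0def
  have hδ0pos : 0 < δ0 := (Finset.lt_inf'_iff _).2 fun p _ => hδf p.1 p.2
  have hδ0le : ∀ i k, δ0 ≤ δf i k := fun i k =>
    Finset.inf'_le (fun p : Fin n × Fin m => δf p.1 p.2) (Finset.mem_univ (i, k))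
  have hlow : ∀ i k x, x ∈ Set.Icc 0 δ0 → (1 - η) * x ≤ h i k x := fun i k x hx =>
    hlowf i k x ⟨hx.1, hx.2.trans (hδ0le i k)⟩
  set maxv : ℝ := Finset.univ.sup' Finset.univ_nonempty v with hmaxvdef
  have hmaxv : 0 < maxv :=
    lt_of_lt_of_le (hv (Classical.arbitrary _)) (Finset.le_sup' v (Finset.mem_univ _))
  set s : ℝ := δ0 / maxv with hsdef
  have hs : 0 < s := div_pos hδ0pos hmaxv
  set ℓ : Fin n → ℝ := fun i => s * v i with hℓdef
  have hℓpos : ∀ i, 0 < ℓ i := fun i => mul_pos hs (hv i)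
  have hℓδ : ∀ i, ℓ i ≤ δ0 := by
    intro i
    have h1 : v i ≤ maxv := Finset.le_sup' v (Finset.mem_univ i)
    calc ℓ i = s * v i := rfl
      _ ≤ s * maxv := mul_le_mul_of_nonneg_left h1 hs.le
      _ = δ0 := div_mul_cancel₀ _ hmaxv.ne'
  -- choice of R, M
  set R : ℝ := Finset.univ.sup' Finset.univ_nonempty fun i =>
      max (ℓ i / u i) ((∑ k, β i k * B i k) /
        (d i * u i - ∑ j ∈ Finset.univ.erase i, a i j * u j)) with hRdef
  set Mb : Fin n → ℝ := fun i => R * u i with hMbdef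
  have hγ : ∀ i, 0 < d i * u i - ∑ j ∈ Finset.univ.erase i, a i j * u j :=
    fun i => sub_pos.2 (hM i)
  have hℓM : ∀ i, ℓ i ≤ Mb i := by
    intro i
    have h0 := Finset.le_sup' (f := fun i => max (ℓ i / u i) ((∑ k, β i k * B i k) /
        (d i * u i - ∑ j ∈ Finset.univ.erase i, a i j * u j))) (Finset.mem_univ i)
    have h1 : ℓ i / u i ≤ R := le_trans (le_max_left _ _) h0
    have h2 : (ℓ i / u i) * u i = ℓ i := div_mul_cancel₀ _ (hu i).ne'
    calc ℓ i = (ℓ i / u i) * u i := h2.symm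
      _ ≤ R * u i := mul_le_mul_of_nonneg_right h1 (hu i).le
      _ = Mb i := rfl
  have hBγ : ∀ i, (∑ k, β i k * B i k) ≤
      R * (d i * u i - ∑ j ∈ Finset.univ.erase i, a i j * u j) := by
    intro i
    have h1 : (∑ k, β i k * B i k) /
        (d i * u i - ∑ j ∈ Finset.univ.erase i, a i j * u j) ≤ R := by
      have h0 := Finset.le_sup' (f := fun i => max (ℓ i / u i) ((∑ k, β i k * B i k) /
          (d i * u i - ∑ j ∈ Finset.univ.erase i, a i j * u j))) (Finset.mem_univ i)
      exact le_trans (le_max_right _ _) h0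
    have h2 : (∑ k, β i k * B i k) = ((∑ k, β i k * B i k) /
        (d i * u i - ∑ j ∈ Finset.univ.erase i, a i j * u j)) *
        (d i * u i - ∑ j ∈ Finset.univ.erase i, a i j * u j) :=
      (div_mul_cancel₀ _ (hγ i).ne').symm
    rw [h2]
    exact mul_le_mul_of_nonneg_right h1 (hγ i).le
  -- strict subsolution at ℓ
  have hsub : ∀ i, 0 < (∑ j ∈ Finset.univ.erase i, a i j * ℓ j) + φ i (ℓ i) - d i * ℓ i := by
    intro i
    have hφlow : (1 - η) * ((∑ k, β i k) * ℓ i) ≤ φ i (ℓ i) := by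
      have h1 : ∀ k ∈ (Finset.univ : Finset (Fin m)),
          β i k * ((1 - η) * ℓ i) ≤ β i k * h i k (ℓ i) :=
        fun k _ => mul_le_mul_of_nonneg_left (hlow i k (ℓ i) ⟨(hℓpos i).le, hℓδ i⟩) (hβnneg i k)
      calc (1 - η) * ((∑ k, β i k) * ℓ i) = ∑ k, β i k * ((1 - η) * ℓ i) := by
            rw [← Finset.sum_mul]; ring
        _ ≤ ∑ k, β i k * h i k (ℓ i) := Finset.sum_le_sum h1
        _ = φ i (ℓ i) := rfl
    have hsum : (∑ j ∈ Finset.univ.erase i, a i j * ℓ j)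
        = s * ∑ j ∈ Finset.univ.erase i, a i j * v j := by
      rw [Finset.mul_sum]
      apply Finset.sum_congr rfl
      intro j _
      show a i j * (s * v j) = s * (a i j * v j)
      ring
    have hkey := hηθ i
    have hstep : 0 < s * ((((∑ k, β i k) - d i) * v i +
        ∑ j ∈ Finset.univ.erase i, a i j * v j) - η * ((∑ k, β i k) * v i)) :=
      mul_pos hs (by linarith)
    have hℓi : ℓ i = s * v i := rfl
    rw [hsum]
    rw [hℓi] at hφlow ⊢
    nlinarith [hφlow, hstep]
  -- supersolution at Mb
  have hsup : ∀ i (c : ℝ), c ≤ (∑ j ∈ Finset.univ.erase i, a i j * Mb j) →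
      c + φ i (Mb i) - d i * Mb i ≤ 0 := by
    intro i c hc
    have hMpos : 0 ≤ Mb i := le_trans (hℓpos i).le (hℓM i)
    have h1 : φ i (Mb i) ≤ ∑ k, β i k * B i k := hφle i (Mb i) hMpos
    have hsum : (∑ j ∈ Finset.univ.erase i, a i j * Mb j)
        = R * ∑ j ∈ Finset.univ.erase i, a i j * u j := by
      rw [Finset.mul_sum]
      apply Finset.sum_congr rfl
      intro j _
      show a i j * (R * u j) = R * (a i j * u j)
      ring
    have h2 := hBγ i
    have hMi : Mb i = R * u i := rfl
    rw [hsum] at hc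
    rw [hMi]
    nlinarith
  -- the minimal-root map
  have root : ∀ i (c : ℝ), (∑ j ∈ Finset.univ.erase i, a i j * ℓ j) ≤ c →
      c ≤ (∑ j ∈ Finset.univ.erase i, a i j * Mb j) →
      sInf {y ∈ Set.Icc (ℓ i) (Mb i) | c + φ i y - d i * y ≤ 0} ∈ Set.Icc (ℓ i) (Mb i) ∧
      c + φ i (sInf {y ∈ Set.Icc (ℓ i) (Mb i) | c + φ i y - d i * y ≤ 0})
        - d i * sInf {y ∈ Set.Icc (ℓ i) (Mb i) | c + φ i y - d i * y ≤ 0} = 0 ∧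
      ∀ y ∈ Set.Icc (ℓ i) (Mb i), c + φ i y - d i * y ≤ 0 →
        sInf {y ∈ Set.Icc (ℓ i) (Mb i) | c + φ i y - d i * y ≤ 0} ≤ y := by
    intro i c hc1 hc2
    have hcont : ContinuousOn (fun y => c + φ i y - d i * y) (Set.Icc (ℓ i) (Mb i)) := by
      intro y hy
      have hypos : 0 < y := lt_of_lt_of_le (hℓpos i) hy.1
      exact ((continuousAt_const.add (hφcont i y hypos)).sub
        (continuousAt_const.mul continuousAt_id)).continuousWithinAt
    have hfa : 0 < c + φ i (ℓ i) - d i * ℓ i := by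
      have := hsub i; linarith
    have hfb : c + φ i (Mb i) - d i * Mb i ≤ 0 := hsup i c hc2
    exact stmt8_minRoot (fun y => c + φ i y - d i * y) (ℓ i) (Mb i) (hℓM i) hcont hfa hfb
  -- the operator T
  set T : (Fin n → ℝ) → Fin n → ℝ := fun x i =>
    sInf {y ∈ Set.Icc (ℓ i) (Mb i) |
      (∑ j ∈ Finset.univ.erase i, a i j * x j) + φ i y - d i * y ≤ 0} with hTdef
  have hcbound : ∀ x : Fin n → ℝ, (∀ j, x j ∈ Set.Icc (ℓ j) (Mb j)) → ∀ i,
      (∑ j ∈ Finset.univ.erase i, a i j * ℓ j) ≤ (∑ j ∈ Finset.univ.erase i, a i j * x j) ∧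
      (∑ j ∈ Finset.univ.erase i, a i j * x j) ≤ (∑ j ∈ Finset.univ.erase i, a i j * Mb j) := by
    intro x hx i
    constructor
    · exact Finset.sum_le_sum fun j hj =>
        mul_le_mul_of_nonneg_left ((hx j).1) (hanneg i j (Finset.mem_erase.1 hj).1)
    · exact Finset.sum_le_sum fun j hj =>
        mul_le_mul_of_nonneg_left ((hx j).2) (hanneg i j (Finset.mem_erase.1 hj).1)
  have hTmem : ∀ x, (∀ j, x j ∈ Set.Icc (ℓ j) (Mb j)) → ∀ i, T x i ∈ Set.Icc (ℓ i) (Mb i) := by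
    intro x hx i
    exact (root i _ (hcbound x hx i).1 (hcbound x hx i).2).1
  have hTeq : ∀ x, (∀ j, x j ∈ Set.Icc (ℓ j) (Mb j)) → ∀ i,
      (∑ j ∈ Finset.univ.erase i, a i j * x j) + φ i (T x i) - d i * T x i = 0 := by
    intro x hx i
    exact (root i _ (hcbound x hx i).1 (hcbound x hx i).2).2.1
  have hTmin : ∀ x, (∀ j, x j ∈ Set.Icc (ℓ j) (Mb j)) → ∀ i,
      ∀ y ∈ Set.Icc (ℓ i) (Mb i),
      (∑ j ∈ Finset.univ.erase i, a i j * x j) + φ i y - d i * y ≤ 0 → T x i ≤ y := by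
    intro x hx i
    exact (root i _ (hcbound x hx i).1 (hcbound x hx i).2).2.2
  have hTmono : ∀ x y, (∀ j, x j ∈ Set.Icc (ℓ j) (Mb j)) →
      (∀ j, y j ∈ Set.Icc (ℓ j) (Mb j)) → (∀ j, x j ≤ y j) → ∀ i, T x i ≤ T y i := by
    intro x y hx hy hxy i
    apply hTmin x hx i (T y i) (hTmem y hy i)
    have heq := hTeq y hy i
    have hc : (∑ j ∈ Finset.univ.erase i, a i j * x j) ≤
        (∑ j ∈ Finset.univ.erase i, a i j * y j) :=
      Finset.sum_le_sum fun j hj =>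
        mul_le_mul_of_nonneg_left (hxy j) (hanneg i j (Finset.mem_erase.1 hj).1)
    linarith
  -- Knaster–Tarski
  set S : Set (Fin n → ℝ) :=
    {x | (∀ j, x j ∈ Set.Icc (ℓ j) (Mb j)) ∧ ∀ j, x j ≤ T x j} with hSdef
  have hℓK : ∀ j, ℓ j ∈ Set.Icc (ℓ j) (Mb j) := fun j => ⟨le_refl _, hℓM j⟩
  have hℓS : ℓ ∈ S := ⟨hℓK, fun j => (hTmem ℓ hℓK j).1⟩
  have hbddA : ∀ j, BddAbove ((fun x : Fin n → ℝ => x j) '' S) := by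
    intro j
    refine ⟨Mb j, ?_⟩
    rintro _ ⟨x, hx, rfl⟩
    exact (hx.1 j).2
  have hSne : ∀ j, ((fun x : Fin n → ℝ => x j) '' S).Nonempty :=
    fun j => ⟨ℓ j, ℓ, hℓS, rfl⟩
  set xs : Fin n → ℝ := fun j => sSup ((fun x : Fin n → ℝ => x j) '' S) with hxsdef
  have hle : ∀ x ∈ S, ∀ j, x j ≤ xs j :=
    fun x hx j => le_csSup (hbddA j) ⟨x, hx, rfl⟩
  have hxsK : ∀ j, xs j ∈ Set.Icc (ℓ j) (Mb j) := by
    intro j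
    constructor
    · exact hle ℓ hℓS j
    · apply csSup_le (hSne j)
      rintro _ ⟨x, hx, rfl⟩
      exact (hx.1 j).2
  have h1 : ∀ j, xs j ≤ T xs j := by
    intro j
    apply csSup_le (hSne j)
    rintro _ ⟨x, hx, rfl⟩
    exact (hx.2 j).trans (hTmono x xs hx.1 hxsK (hle x hx) j)
  have hTxsS : T xs ∈ S :=
    ⟨hTmem xs hxsK, fun j => hTmono xs (T xs) hxsK (hTmem xs hxsK) h1 j⟩
  have hfix : ∀ j, T xs j = xs j := fun j => le_antisymm (hle (T xs) hTxsS j) (h1 j)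
  refine ⟨xs, fun i => lt_of_lt_of_le (hℓpos i) (hxsK i).1, fun i => ?_⟩
  have heq := hTeq xs hxsK i
  rw [hfix i] at heq
  have hφeq : φ i (xs i) = ∑ k, β i k * h i k (xs i) := rfl
  rw [hφeq] at heq
  linarith
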